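/- Let 𝒜 and ℬ be uniform algebras on compact Hausdorff spaces X and Y, and T : 𝒜⁻¹ → ℬ⁻¹ a surjective map with σ_π(TfTg) ⊆ σ_π(fg) for all f, g ∈ 𝒜⁻¹. Then (T1)² = 1. -/
import Mathlib


/-- The peripheral spectrum of a continuous function on a compact space. -/
noncomputable def perSpec {X : Type*} [TopologicalSpace X] [CompactSpace X]
    (f : C(X, ℂ)) : Set ℂ :=
  {z | z ∈ Set.range f ∧ ‖z‖ = ‖f‖}

/-- A peak set for a subalgebra of C(X, ℂ). -/
def IsPeakSet {X : Type*} [TopologicalSpace X] [CompactSpace X]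
    (A : Subalgebra ℂ C(X, ℂ)) (E : Set X) : Prop :=
  ∃ f ∈ A, perSpec f = {1} ∧ E = f ⁻¹' {1}

/-- The Choquet boundary (set of p-points): points x such that {x} is an
intersection of peak sets. -/
def ChoquetBdry {X : Type*} [TopologicalSpace X] [CompactSpace X]
    (A : Subalgebra ℂ C(X, ℂ)) : Set X :=
  {x | ∃ P : Set (Set X), (∀ E ∈ P, IsPeakSet A E) ∧ ⋂₀ P = {x}}


lemma perSpec_nonempty {Y : Type*} [TopologicalSpace Y] [CompactSpace Y] [Nonempty Y]
    (f : C(Y, ℂ)) : ∃ z, z ∈ perSpec f := by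
  obtain ⟨y, hy⟩ := (map_continuous f).norm.exists_forall_ge (by simp [Filter.cocompact_eq_bot])
  refine ⟨f y, ⟨y, rfl⟩, le_antisymm (f.norm_coe_le_norm y) ?_⟩
  exact (ContinuousMap.norm_le f (norm_nonneg _)).mpr hy

lemma perSpec_one {X : Type*} [TopologicalSpace X] [CompactSpace X] [Nonempty X] :
    perSpec (1 : C(X, ℂ)) = {1} := by
  ext z
  constructor
  · rintro ⟨⟨x, rfl⟩, -⟩; rfl
  · rintro rfl
    exact ⟨⟨Classical.arbitrary X, rfl⟩, by simp⟩

theorem stmt9 {X Y : Type*} [TopologicalSpace X] [CompactSpace X]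
    [TopologicalSpace Y] [CompactSpace Y]
    (A : Subalgebra ℂ C(X, ℂ)) (B : Subalgebra ℂ C(Y, ℂ))
    (hA : IsClosed (A : Set C(X, ℂ))) (hB : IsClosed (B : Set C(Y, ℂ)))
    (hAsep : ∀ x x' : X, x ≠ x' → ∃ f ∈ A, f x ≠ f x')
    (hBsep : ∀ y y' : Y, y ≠ y' → ∃ g ∈ B, g y ≠ g y')
    (T : (↥A)ˣ → (↥B)ˣ) (hsurj : Function.Surjective T)
    (h : ∀ f g : (↥A)ˣ, perSpec (((T f * T g : (↥B)ˣ) : ↥B) : C(Y, ℂ))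
        ⊆ perSpec (((f * g : (↥A)ˣ) : ↥A) : C(X, ℂ))) :
    (T 1) ^ 2 = 1 := by
  -- trivial if Y is empty
  rcases isEmpty_or_nonempty Y with hY | hY
  · haveI : Subsingleton C(Y, ℂ) :=
      ⟨fun f g => ContinuousMap.ext fun y => (IsEmpty.false y).elim⟩
    haveI : Subsingleton (↥B) := ⟨fun a b => Subtype.ext (Subsingleton.elim _ _)⟩
    haveI : Subsingleton (↥B)ˣ := ⟨fun a b => Units.ext (Subsingleton.elim _ _)⟩
    exact Subsingleton.elim _ _
  -- X cannot be empty
  rcases isEmpty_or_nonempty X with hX | hX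
  · exfalso
    obtain ⟨z, hz⟩ := perSpec_nonempty (((T 1 * T 1 : (↥B)ˣ) : ↥B) : C(Y, ℂ))
    obtain ⟨⟨x, -⟩, -⟩ := h 1 1 hz
    exact IsEmpty.false x
  -- main case
  set u : C(Y, ℂ) := (((T 1 : (↥B)ˣ) : ↥B) : C(Y, ℂ)) with hu
  set v : C(Y, ℂ) := ((((T 1)⁻¹ : (↥B)ˣ) : ↥B) : C(Y, ℂ)) with hv
  have huv : u * v = 1 := by
    rw [hu, hv]
    norm_cast
    rw [mul_inv_cancel]
    rfl
  -- perSpec (u * u) ⊆ {1}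
  have key1 : perSpec (u * u) ⊆ {1} := by
    have := h 1 1
    simpa [perSpec_one, hu, Units.val_mul] using this
  -- ‖u * u‖ = 1
  have hnuu : ‖u * u‖ = 1 := by
    obtain ⟨z, hz⟩ := perSpec_nonempty (u * u)
    have hz1 : z = 1 := key1 hz
    rw [← hz.2, hz1, norm_one]
  -- choose g with T g = (T 1)⁻¹
  obtain ⟨g, hg⟩ := hsurj (T 1)⁻¹
  set G : C(X, ℂ) := (((g : ↥A) : C(X, ℂ))) with hG
  -- ‖G‖ = 1
  have hnG : ‖G‖ = 1 := by
    have h1g := h 1 g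
    rw [hg] at h1g
    have hone : (((T 1 * (T 1)⁻¹ : (↥B)ˣ) : ↥B) : C(Y, ℂ)) = 1 := by
      rw [mul_inv_cancel]; rfl
    rw [hone, perSpec_one] at h1g
    have : (1 : ℂ) ∈ perSpec (((1 * g : (↥A)ˣ) : ↥A) : C(X, ℂ)) := h1g rfl
    have h2 := this.2
    rw [one_mul] at h2
    simpa [hG] using h2.symm
  -- ‖v * v‖ ≤ 1
  have hnvv : ‖v * v‖ ≤ 1 := by
    have hgg := h g g
    rw [hg] at hgg
    have hvv : ((((T 1)⁻¹ * (T 1)⁻¹ : (↥B)ˣ) : ↥B) : C(Y, ℂ)) = v * v := by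
      rw [hv]; norm_cast
    rw [hvv] at hgg
    obtain ⟨z, hz⟩ := perSpec_nonempty (v * v)
    have hz2 := (hgg hz).2
    rw [← hz.2, hz2]
    calc ‖(((g * g : (↥A)ˣ) : ↥A) : C(X, ℂ))‖ = ‖G * G‖ := by rw [hG]; norm_cast
    _ ≤ ‖G‖ * ‖G‖ := norm_mul_le _ _
    _ = 1 := by rw [hnG, mul_one]
  -- the pointwise argument
  have hpt : ∀ y : Y, u y * u y = 1 := by
    intro y
    have hval : (u * u) y * ((v * v) y) = 1 := by
      have : (u * v) y = 1 := by rw [huv]; rfl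
      simp only [ContinuousMap.mul_apply] at this ⊢
      rw [mul_mul_mul_comm, this, one_mul]
    have h1 : ‖(u * u) y‖ ≤ 1 := le_of_le_of_eq ((u * u).norm_coe_le_norm y) hnuu
    have h2 : ‖(v * v) y‖ ≤ 1 := le_trans ((v * v).norm_coe_le_norm y) hnvv
    have hprod : ‖(u * u) y‖ * ‖(v * v) y‖ = 1 := by
      rw [← norm_mul, hval, norm_one]
    have heq : ‖(u * u) y‖ = 1 := by nlinarith [norm_nonneg ((u * u) y), norm_nonneg ((v * v) y)]
    have hmem : (u * u) y ∈ perSpec (u * u) := ⟨⟨y, rfl⟩, heq.trans hnuu.symm⟩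
    have := key1 hmem
    simpa [ContinuousMap.mul_apply] using this
  -- conclude
  ext : 1
  apply Subtype.ext
  show ((((T 1) ^ 2 : (↥B)ˣ) : ↥B) : C(Y, ℂ)) = (((1 : (↥B)ˣ) : ↥B) : C(Y, ℂ))
  push_cast
  ext y
  simpa [sq, ContinuousMap.mul_apply] using hpt y
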